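/- arXiv:math/0511745 — 3 statements merged into one kernel-verified Lean document; each statement's English description precedes it below -/
import Mathlib

section
/- For all a, b ≥ 0 and β ∈ (0,1], one has (a+b)^(1+β) − a^(1+β) ≤ b^(1+β) + (1+β) · a^((1+β)/2) · b^((1+β)/2). -/
open Real

lemma aux_subadd (x y β : ℝ) (hx : 0 ≤ x) (hy : 0 ≤ y) (hβ0 : 0 ≤ β) (hβ1 : β ≤ 1) :
    (x + y) ^ β ≤ x ^ β + y ^ β := by
  lift x to NNReal using hx
  lift y to NNReal using hy
  have := NNReal.rpow_add_le_add_rpow x y hβ0 hβ1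
  exact_mod_cast this

lemma aux_key (a b β : ℝ) (ha : 0 ≤ a) (hb : 0 ≤ b) (hβ : 0 < β) (hβ1 : β ≤ 1) :
    (a + b) ^ (1 + β) ≤ a ^ (1 + β) + b ^ (1 + β) + (1 + β) * a ^ β * b := by
  set p := 1 + β with hp
  have hp1 : 1 ≤ p := by simp [hp]; linarith
  have hp0 : p ≠ 0 := by positivity
  set g : ℝ → ℝ := fun x => a ^ p + x ^ p + p * a ^ β * x - (a + x) ^ p with hg
  have hderiv : ∀ x : ℝ, HasDerivAt g (p * x ^ (p - 1) + p * a ^ β - p * (a + x) ^ (p - 1) * 1) x := by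
    intro x
    have h1 : HasDerivAt (fun x : ℝ => x ^ p) (p * x ^ (p - 1)) x :=
      Real.hasDerivAt_rpow_const (Or.inr hp1)
    have h2 : HasDerivAt (fun x : ℝ => (a + x) ^ p) (p * (a + x) ^ (p - 1) * 1) x := by
      have := (Real.hasDerivAt_rpow_const (p := p) (x := a + x) (Or.inr hp1)).comp x
        ((hasDerivAt_id x).const_add a)
      simpa [Function.comp_def] using this
    have h3 : HasDerivAt (fun x : ℝ => p * a ^ β * x) (p * a ^ β) x := by
      simpa using (hasDerivAt_id x).const_mul (p * a ^ β)
    have H := ((hasDerivAt_const x (a ^ p)).add h1 |>.add h3).sub h2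
    rw [show p * x ^ (p - 1) + p * a ^ β - p * (a + x) ^ (p - 1) * 1
      = 0 + p * x ^ (p - 1) + p * a ^ β - p * (a + x) ^ (p - 1) * 1 by ring]
    exact H
  have hmono : MonotoneOn g (Set.Icc 0 b) := by
    apply monotoneOn_of_deriv_nonneg (convex_Icc 0 b)
    · exact fun x _ => (hderiv x).differentiableAt.continuousAt.continuousWithinAt
    · intro x hx
      exact (hderiv x).differentiableAt.differentiableWithinAt
    · intro x hx
      rw [(hderiv x).deriv]
      rw [interior_Icc] at hx
      have hx0 : 0 < x := hx.1
      have hsub : (a + x) ^ (p - 1) ≤ a ^ (p - 1) + x ^ (p - 1) := by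
        have : p - 1 = β := by simp [hp]
        rw [this]
        exact aux_subadd a x β ha hx0.le hβ.le hβ1
      have hβeq : p - 1 = β := by simp [hp]
      rw [hβeq] at hsub ⊢
      have hppos : 0 < p := by linarith
      nlinarith [hsub]
  have h0 : g 0 = 0 := by
    simp [hg, Real.zero_rpow hp0]
  have := hmono (Set.left_mem_Icc.mpr hb) (Set.right_mem_Icc.mpr hb) hb
  rw [h0] at this
  simp only [hg] at this
  linarith

lemma aux_cross (a b β : ℝ) (ha : 0 ≤ a) (hb : 0 ≤ b) (hba : b ≤ a) (hβ : 0 < β)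
    (hβ1 : β ≤ 1) : a ^ β * b ≤ a ^ ((1 + β) / 2) * b ^ ((1 + β) / 2) := by
  rcases eq_or_lt_of_le hb with rfl | hb0
  · simp [Real.zero_rpow (show (1 + β) / 2 ≠ 0 by positivity)]
  have ha0 : 0 < a := lt_of_lt_of_le hb0 hba
  have hmono : b ^ ((1 - β) / 2) ≤ a ^ ((1 - β) / 2) :=
    Real.rpow_le_rpow hb0.le hba (by linarith)
  have hpos : 0 < a ^ ((1 - β) / 2) := by positivity
  have key : a ^ ((β - 1) / 2) * b ^ ((1 - β) / 2) ≤ 1 := by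
    rw [show (β - 1) / 2 = -((1 - β) / 2) by ring, Real.rpow_neg ha0.le]
    calc (a ^ ((1 - β) / 2))⁻¹ * b ^ ((1 - β) / 2)
        ≤ (a ^ ((1 - β) / 2))⁻¹ * a ^ ((1 - β) / 2) :=
          mul_le_mul_of_nonneg_left hmono (by positivity)
      _ = 1 := inv_mul_cancel₀ hpos.ne'
  have e1 : (1 + β) / 2 + (β - 1) / 2 = β := by ring
  have e2 : (1 + β) / 2 + (1 - β) / 2 = (1 : ℝ) := by ring
  calc a ^ β * b
      = a ^ ((1 + β) / 2) * b ^ ((1 + β) / 2) * (a ^ ((β - 1) / 2) * b ^ ((1 - β) / 2)) := by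
        rw [mul_mul_mul_comm, ← Real.rpow_add ha0, ← Real.rpow_add hb0, e1, e2, Real.rpow_one]
    _ ≤ a ^ ((1 + β) / 2) * b ^ ((1 + β) / 2) * 1 :=
        mul_le_mul_of_nonneg_left key (by positivity)
    _ = _ := mul_one _

theorem stmt_1 (a b β : ℝ) (ha : 0 ≤ a) (hb : 0 ≤ b) (hβ : 0 < β) (hβ1 : β ≤ 1) :
    (a + b) ^ (1 + β) - a ^ (1 + β) ≤
      b ^ (1 + β) + (1 + β) * a ^ ((1 + β) / 2) * b ^ ((1 + β) / 2) := by
  have hp : (0:ℝ) < 1 + β := by linarith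
  rcases le_total b a with h | h
  · have k := aux_key a b β ha hb hβ hβ1
    have c := mul_le_mul_of_nonneg_left (aux_cross a b β ha hb h hβ hβ1) hp.le
    nlinarith
  · have k := aux_key b a β hb ha hβ hβ1
    have c := mul_le_mul_of_nonneg_left (aux_cross b a β hb ha h hβ hβ1) hp.le
    rw [add_comm a b]
    nlinarith
end

section
/- Let d > α > 0 and let p_t denote the transition density of the spherically symmetric α-stable process on ℝ^d, satisfying the self-similarity p_{au}(x) = a^{−d/α} p_u(x a^{−1/α}) and the bound p_1(x) ≤ C/(1+|x|^{d+α}). If d = α(1+β)/β with 0 < β < 1, then the function h(x) = ∫₀¹ p_u(x) u du belongs to L^{1+β}(ℝ^d), i.e. ∫_{ℝ^d} h(x)^{1+β} dx < ∞. -/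
open MeasureTheory Real Set
open scoped ENNReal

namespace Stmt3Aux
open Metric


lemma shell_lint {d : ℕ} (s a b : ℝ) (hs : 0 ≤ s) (ha : 0 < a) (hb : 0 ≤ b) :
    ∫⁻ x : EuclideanSpace ℝ (Fin d) in closedBall 0 b \ ball 0 a,
      ENNReal.ofReal (‖x‖ ^ (-s)) ≤
    ENNReal.ofReal (a ^ (-s) * b ^ d) * volume (ball (0:EuclideanSpace ℝ (Fin d)) 1) := by
  have h1 : ∫⁻ x : EuclideanSpace ℝ (Fin d) in closedBall 0 b \ ball 0 a,
      ENNReal.ofReal (‖x‖ ^ (-s)) ≤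
      ∫⁻ _ : EuclideanSpace ℝ (Fin d) in closedBall 0 b \ ball 0 a,
      ENNReal.ofReal (a ^ (-s)) := by
    refine setLIntegral_mono measurable_const fun x hx => ?_
    refine ENNReal.ofReal_le_ofReal ?_
    have hxa : a ≤ ‖x‖ := by
      have := hx.2
      simpa [mem_ball_zero_iff, not_lt] using this
    exact Real.rpow_le_rpow_of_nonpos ha hxa (neg_nonpos.2 hs)
  refine h1.trans ?_
  rw [setLIntegral_const]
  have h2 : volume ((closedBall 0 b \ ball 0 a : Set (EuclideanSpace ℝ (Fin d)))) ≤
      volume (closedBall (0:EuclideanSpace ℝ (Fin d)) b) := measure_mono diff_subset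
  rw [Measure.addHaar_closedBall _ _ hb, finrank_euclideanSpace_fin] at h2
  calc ENNReal.ofReal (a ^ (-s)) * volume ((closedBall 0 b \ ball 0 a : Set (EuclideanSpace ℝ (Fin d))))
      ≤ ENNReal.ofReal (a ^ (-s)) * (ENNReal.ofReal (b ^ d) *
        volume (ball (0:EuclideanSpace ℝ (Fin d)) 1)) := by gcongr
    _ = _ := by rw [← mul_assoc, ← ENNReal.ofReal_mul (by positivity)]

lemma fin_ball {d : ℕ} (s : ℝ) (hs0 : 0 < s) (hsd : s < d) :
    ∫⁻ x : EuclideanSpace ℝ (Fin d) in ball 0 1, ENNReal.ofReal (‖x‖ ^ (-s)) < ⊤ := by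
  classical
  set E := EuclideanSpace ℝ (Fin d)
  set A : ℕ → Set E := fun n => closedBall 0 ((2:ℝ)⁻¹ ^ n) \ ball 0 ((2:ℝ)⁻¹ ^ (n+1)) with hA
  have hcover : (ball (0:E) 1) ⊆ {0} ∪ ⋃ n, A n := by
    intro x hx
    rcases eq_or_ne x 0 with h0 | h0
    · exact Or.inl (by simp [h0])
    refine Or.inr ?_
    have hxpos : 0 < ‖x‖ := norm_pos_iff.2 h0
    have hex : ∃ n, (2:ℝ)⁻¹ ^ (n+1) ≤ ‖x‖ := by
      obtain ⟨n, hn⟩ := exists_pow_lt_of_lt_one hxpos (by norm_num : (2:ℝ)⁻¹ < 1)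
      exact ⟨n, le_trans (pow_le_pow_of_le_one (by norm_num) (by norm_num) (Nat.le_succ n)) hn.le⟩
    set N := Nat.find hex with hN
    have hspec : (2:ℝ)⁻¹ ^ (N+1) ≤ ‖x‖ := Nat.find_spec hex
    refine mem_iUnion.2 ⟨N, ?_, ?_⟩
    · rw [mem_closedBall_zero_iff]
      match hNN : N with
      | 0 => simpa using (mem_ball_zero_iff.1 hx).le
      | m+1 =>
        have := Nat.find_min hex (by omega : m < N)
        exact (not_le.1 this).le
    · rw [mem_ball_zero_iff]
      exact not_lt.2 hspec
  have hsub := lintegral_mono_set (μ := volume) (f := fun x : E => ENNReal.ofReal (‖x‖ ^ (-s))) hcover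
  refine lt_of_le_of_lt hsub ?_
  have hsplit : ∫⁻ x : E in ({0} ∪ ⋃ n, A n), ENNReal.ofReal (‖x‖ ^ (-s)) ≤
      (∫⁻ x : E in {0}, ENNReal.ofReal (‖x‖ ^ (-s))) +
      ∫⁻ x : E in ⋃ n, A n, ENNReal.ofReal (‖x‖ ^ (-s)) :=
    lintegral_union_le _ _ _
  refine lt_of_le_of_lt hsplit ?_
  have h0 : ∫⁻ x : E in {0}, ENNReal.ofReal (‖x‖ ^ (-s)) = 0 := by
    rw [lintegral_singleton]
    simp [Real.zero_rpow (by linarith : -s ≠ 0)]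
  rw [h0, zero_add]
  refine lt_of_le_of_lt (lintegral_iUnion_le _ _) ?_
  set ρ : ℝ := (2:ℝ)⁻¹ ^ ((d:ℝ) - s) with hρ
  have hρ0 : 0 ≤ ρ := Real.rpow_nonneg (by norm_num) _
  have hρ1 : ρ < 1 := Real.rpow_lt_one (by norm_num) (by norm_num) (by linarith)
  have hterm : ∀ n, ∫⁻ x : E in A n, ENNReal.ofReal (‖x‖ ^ (-s)) ≤
      ENNReal.ofReal ((2:ℝ) ^ s) * ENNReal.ofReal (ρ ^ n) *
        volume (ball (0:E) 1) := by
    intro n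
    refine le_trans (shell_lint s _ _ hs0.le (by positivity) (by positivity)) ?_
    have key : ((2:ℝ)⁻¹ ^ (n+1)) ^ (-s) * ((2:ℝ)⁻¹ ^ n) ^ d = (2:ℝ) ^ s * ρ ^ n := by
      rw [← Real.rpow_natCast ((2:ℝ)⁻¹) (n+1), ← Real.rpow_natCast ((2:ℝ)⁻¹) n,
        ← Real.rpow_natCast (((2:ℝ)⁻¹) ^ ((n:ℝ))) d,
        ← Real.rpow_mul (by norm_num), ← Real.rpow_mul (by norm_num), hρ,
        ← Real.rpow_natCast ((2:ℝ)⁻¹ ^ ((d:ℝ) - s)) n, ← Real.rpow_mul (by norm_num),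
        ← Real.rpow_add (by norm_num : (0:ℝ) < 2⁻¹), ← Real.rpow_neg_one (2:ℝ),
        ← Real.rpow_mul (by norm_num)]
      push_cast
      ring_nf
      rw [one_div, Real.inv_rpow (by norm_num), ← Real.rpow_neg (by norm_num),
        ← Real.rpow_add (by norm_num : (0:ℝ) < 2)]
      ring_nf
    rw [← ENNReal.ofReal_mul (by positivity), key,
      ENNReal.ofReal_mul (by positivity)]
  refine lt_of_le_of_lt (ENNReal.tsum_le_tsum hterm) ?_
  rw [ENNReal.tsum_mul_right]
  rw [ENNReal.tsum_mul_left]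
  have : ∑' n : ℕ, ENNReal.ofReal (ρ ^ n) = ∑' n : ℕ, (ENNReal.ofReal ρ) ^ n := by
    congr 1; funext n; exact ENNReal.ofReal_pow hρ0 n
  rw [this, ENNReal.tsum_geometric]
  refine ENNReal.mul_lt_top (ENNReal.mul_lt_top ENNReal.ofReal_lt_top ?_) measure_ball_lt_top
  exact ENNReal.inv_lt_top.2 (tsub_pos_iff_lt.2 (ENNReal.ofReal_lt_one.2 hρ1))

lemma fin_compl {d : ℕ} (s : ℝ) (hs0 : 0 < s) (hsd : (d:ℝ) < s) :
    ∫⁻ x : EuclideanSpace ℝ (Fin d) in (ball 0 1)ᶜ, ENNReal.ofReal (‖x‖ ^ (-s)) < ⊤ := by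
  classical
  set E := EuclideanSpace ℝ (Fin d)
  set A : ℕ → Set E := fun n => closedBall 0 ((2:ℝ) ^ (n+1)) \ ball 0 ((2:ℝ) ^ n) with hA
  have hcover : ((ball (0:E) 1)ᶜ) ⊆ ⋃ n, A n := by
    intro x hx
    have hx1 : 1 ≤ ‖x‖ := by
      have := hx
      simp only [mem_compl_iff, mem_ball_zero_iff, not_lt] at this
      exact this
    have hex : ∃ n, ‖x‖ ≤ (2:ℝ) ^ (n+1) := by
      obtain ⟨n, hn⟩ := pow_unbounded_of_one_lt ‖x‖ (by norm_num : (1:ℝ) < 2)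
      exact ⟨n, hn.le.trans (pow_le_pow_right₀ (by norm_num) (Nat.le_succ n))⟩
    set N := Nat.find hex with hN
    have hspec : ‖x‖ ≤ (2:ℝ) ^ (N+1) := Nat.find_spec hex
    refine mem_iUnion.2 ⟨N, mem_closedBall_zero_iff.2 hspec, ?_⟩
    rw [mem_ball_zero_iff, not_lt]
    match hNN : N with
    | 0 => simpa using hx1
    | m+1 =>
      have := Nat.find_min hex (by omega : m < N)
      exact (not_le.1 this).le
  refine lt_of_le_of_lt (lintegral_mono_set hcover) ?_
  refine lt_of_le_of_lt (lintegral_iUnion_le _ _) ?_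
  set ρ : ℝ := (2:ℝ) ^ ((d:ℝ) - s) with hρ
  have hρ0 : 0 ≤ ρ := Real.rpow_nonneg (by norm_num) _
  have hρ1 : ρ < 1 := Real.rpow_lt_one_of_one_lt_of_neg (by norm_num) (by linarith)
  have hterm : ∀ n, ∫⁻ x : E in A n, ENNReal.ofReal (‖x‖ ^ (-s)) ≤
      ENNReal.ofReal ((2:ℝ) ^ (d:ℝ)) * ENNReal.ofReal (ρ ^ n) * volume (ball (0:E) 1) := by
    intro n
    refine le_trans (shell_lint s _ _ hs0.le (by positivity) (by positivity)) ?_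
    have key : ((2:ℝ) ^ n) ^ (-s) * ((2:ℝ) ^ (n+1)) ^ d = (2:ℝ) ^ (d:ℝ) * ρ ^ n := by
      rw [← Real.rpow_natCast (2:ℝ) (n+1), ← Real.rpow_natCast (2:ℝ) n,
        ← Real.rpow_natCast ((2:ℝ) ^ (((n+1:ℕ)):ℝ)) d, hρ,
        ← Real.rpow_natCast ((2:ℝ) ^ ((d:ℝ) - s)) n,
        ← Real.rpow_mul (by norm_num), ← Real.rpow_mul (by norm_num),
        ← Real.rpow_mul (by norm_num),
        ← Real.rpow_add (by norm_num : (0:ℝ) < 2), ← Real.rpow_add (by norm_num : (0:ℝ) < 2)]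
      push_cast
      ring_nf
    rw [← ENNReal.ofReal_mul (by positivity), key,
      ENNReal.ofReal_mul (by positivity)]
  refine lt_of_le_of_lt (ENNReal.tsum_le_tsum hterm) ?_
  rw [ENNReal.tsum_mul_right, ENNReal.tsum_mul_left]
  have : ∑' n : ℕ, ENNReal.ofReal (ρ ^ n) = ∑' n : ℕ, (ENNReal.ofReal ρ) ^ n := by
    congr 1; funext n; exact ENNReal.ofReal_pow hρ0 n
  rw [this, ENNReal.tsum_geometric]
  refine ENNReal.mul_lt_top (ENNReal.mul_lt_top ENNReal.ofReal_lt_top ?_) measure_ball_lt_top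
  exact ENNReal.inv_lt_top.2 (tsub_pos_iff_lt.2 (ENNReal.ofReal_lt_one.2 hρ1))


lemma meas_rpow_const (c : ℝ) : Measurable fun u : ℝ => u ^ c := by measurability

lemma meas_norm_rpow_const {d : ℕ} (c : ℝ) :
    Measurable fun x : EuclideanSpace ℝ (Fin d) => ‖x‖ ^ c := by fun_prop

section
variable {d : ℕ} {α β C : ℝ}

/-- inner integral pointwise bound -/
lemma inner_bound (hα : 0 < α) (hdα : α < (d : ℝ)) (hβ : 0 < β) (hβ1 : β < 1)
    (hcrit : (d : ℝ) = α * (1 + β) / β)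
    (p : ℝ → EuclideanSpace ℝ (Fin d) → ℝ)
    (hp_meas : ∀ u, Measurable (p u))
    (hp_nonneg : ∀ u x, 0 ≤ p u x)
    (hself : ∀ a u : ℝ, 0 < a → 0 < u → ∀ x,
      p (a * u) x = a ^ (-((d : ℝ) / α)) * p u ((a ^ (-(1 / α)) : ℝ) • x))
    (hbound : ∀ x, p 1 x ≤ C / (1 + ‖x‖ ^ ((d : ℝ) + α)))
    (x : EuclideanSpace ℝ (Fin d)) (hx : 0 < ‖x‖) :
    (∫ u in Ioc (0 : ℝ) 1, p u x * u) ≤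
      if ‖x‖ ≤ 1 then (C/3 + C*β/(1-β)) * ‖x‖ ^ (-(α*(1-β)/β))
      else (C/3 + C*β/(1-β)) * ‖x‖ ^ (-((d:ℝ)+α)) := by
  have hα' : α ≠ 0 := hα.ne'
  have hβ' : (0:ℝ) < 1 - β := by linarith
  have hC : 0 ≤ C := by
    have h := hbound 0
    have h0 : ‖(0 : EuclideanSpace ℝ (Fin d))‖ = 0 := norm_zero
    rw [h0, Real.zero_rpow (by positivity : (d:ℝ) + α ≠ 0)] at h
    simpa using (hp_nonneg 1 0).trans h
  set D : ℝ := (d:ℝ) + α with hD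
  have hD0 : 0 < D := by positivity
  -- rewrite p u x for u > 0
  have hrw : ∀ u : ℝ, 0 < u →
      p u x = u ^ (-((d : ℝ) / α)) * p 1 ((u ^ (-(1 / α)) : ℝ) • x) := by
    intro u hu
    have := hself u 1 hu one_pos x
    rwa [mul_one] at this
  have hynorm : ∀ u : ℝ, 0 < u →
      ‖(u ^ (-(1 / α)) : ℝ) • x‖ = u ^ (-(1/α)) * ‖x‖ := by
    intro u hu
    rw [norm_smul, Real.norm_eq_abs, abs_of_pos (Real.rpow_pos_of_pos hu _)]
  have factA : ∀ u ∈ Ioc (0:ℝ) 1, p u x * u ≤ C * ‖x‖ ^ (-D) * u ^ (2:ℝ) := by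
    intro u hu
    have hu0 : 0 < u := hu.1
    have hy : 0 < ‖(u ^ (-(1 / α)) : ℝ) • x‖ := by
      rw [hynorm u hu0]; positivity
    have h1 : p 1 ((u ^ (-(1 / α)) : ℝ) • x) ≤ C / ‖(u ^ (-(1 / α)) : ℝ) • x‖ ^ D := by
      refine (hbound _).trans ?_
      have hyD := Real.rpow_pos_of_pos hy D
      gcongr
      linarith
    have h2 : C / ‖(u ^ (-(1 / α)) : ℝ) • x‖ ^ D = C * u ^ (D/α) * ‖x‖ ^ (-D) := by
      rw [hynorm u hu0, Real.mul_rpow (Real.rpow_nonneg hu0.le _) (norm_nonneg x),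
        ← Real.rpow_mul hu0.le, show -(1/α)*D = -(D/α) by ring,
        Real.rpow_neg hu0.le, Real.rpow_neg (norm_nonneg x)]
      have h3 : u ^ (D/α) ≠ 0 := (Real.rpow_pos_of_pos hu0 _).ne'
      have h4 : ‖x‖ ^ D ≠ 0 := (Real.rpow_pos_of_pos hx _).ne'
      field_simp
    calc p u x * u = u ^ (-((d:ℝ)/α)) * p 1 ((u ^ (-(1 / α)) : ℝ) • x) * u := by
          rw [hrw u hu0]
      _ ≤ u ^ (-((d:ℝ)/α)) * (C * u ^ (D/α) * ‖x‖ ^ (-D)) * u := by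
          rw [h2] at h1
          have := Real.rpow_nonneg hu0.le (-((d:ℝ)/α))
          gcongr
      _ = C * ‖x‖ ^ (-D) * (u ^ (-((d:ℝ)/α)) * u ^ (D/α) * u ^ (1:ℝ)) := by
          rw [Real.rpow_one]; ring
      _ = C * ‖x‖ ^ (-D) * u ^ (2:ℝ) := by
          have hexp2 : -((d:ℝ)/α) + D/α + 1 = 2 := by
            rw [hD]; field_simp; ring
          rw [← Real.rpow_add hu0, ← Real.rpow_add hu0, hexp2]
  have hda : (d:ℝ)/α = (1+β)/β := by
    rw [hcrit]; field_simp
  have factB : ∀ u ∈ Ioc (0:ℝ) 1, p u x * u ≤ C * u ^ (-(1/β)) := by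
    intro u hu
    have hu0 : 0 < u := hu.1
    have h1 : p 1 ((u ^ (-(1 / α)) : ℝ) • x) ≤ C := by
      refine (hbound _).trans (div_le_self hC ?_)
      have := Real.rpow_nonneg (norm_nonneg ((u ^ (-(1 / α)) : ℝ) • x)) D
      linarith
    calc p u x * u = u ^ (-((d:ℝ)/α)) * p 1 ((u ^ (-(1 / α)) : ℝ) • x) * u := by
          rw [hrw u hu0]
      _ ≤ u ^ (-((d:ℝ)/α)) * C * u := by
          have := Real.rpow_nonneg hu0.le (-((d:ℝ)/α))
          gcongr
      _ = C * (u ^ (-((d:ℝ)/α)) * u ^ (1:ℝ)) := by rw [Real.rpow_one]; ring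
      _ = C * u ^ (-(1/β)) := by
          have hexp : -((d:ℝ)/α) + 1 = -(1/β) := by
            rw [hda]; field_simp; ring
          rw [← Real.rpow_add hu0, hexp]
  -- the dominating function
  set g : ℝ → ℝ := fun u => min (C * ‖x‖ ^ (-D) * u ^ (2:ℝ)) (C * u ^ (-(1/β))) with hg
  have hg_meas : Measurable g :=
    Measurable.min (((meas_rpow_const 2)).const_mul _) ((meas_rpow_const _).const_mul _)
  have hxD : (0:ℝ) ≤ C * ‖x‖ ^ (-D) := mul_nonneg hC (Real.rpow_nonneg (norm_nonneg x) _)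
  have hg_nonneg : ∀ u ∈ Ioc (0:ℝ) 1, 0 ≤ g u := by
    intro u hu
    exact le_min (mul_nonneg (mul_nonneg hC (Real.rpow_nonneg (norm_nonneg x) _))
      (Real.rpow_nonneg hu.1.le _)) (mul_nonneg hC (Real.rpow_nonneg hu.1.le _))
  have hg_le : ∀ u ∈ Ioc (0:ℝ) 1, g u ≤ C * ‖x‖ ^ (-D) := by
    intro u hu
    refine (min_le_left _ _).trans ?_
    have h2 : u ^ (2:ℝ) ≤ 1 := Real.rpow_le_one hu.1.le hu.2 (by norm_num)
    nlinarith [Real.rpow_nonneg (norm_nonneg x) (-D), Real.rpow_nonneg hu.1.le (2:ℝ)]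
  have hg_int : IntegrableOn g (Ioc (0:ℝ) 1) := by
    haveI : IsFiniteMeasure (volume.restrict (Ioc (0:ℝ) 1)) :=
      ⟨by rw [Measure.restrict_apply_univ]; exact measure_Ioc_lt_top⟩
    refine Integrable.mono'
      ((integrable_const (C * ‖x‖ ^ (-D))) :
        Integrable _ (volume.restrict (Ioc (0:ℝ) 1)))
      hg_meas.aestronglyMeasurable ?_
    refine (ae_restrict_iff' measurableSet_Ioc).2 (ae_of_all _ fun u hu => ?_)
    rw [Real.norm_eq_abs, abs_of_nonneg (hg_nonneg u hu)]
    exact hg_le u hu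
  have hmono : (∫ u in Ioc (0 : ℝ) 1, p u x * u) ≤ ∫ u in Ioc (0:ℝ) 1, g u := by
    refine integral_mono_of_nonneg ?_ hg_int ?_
    · refine (ae_restrict_iff' measurableSet_Ioc).2 (ae_of_all _ fun u hu => ?_)
      exact mul_nonneg (hp_nonneg u x) hu.1.le
    · refine (ae_restrict_iff' measurableSet_Ioc).2 (ae_of_all _ fun u hu => ?_)
      exact le_min (factA u hu) (factB u hu)
  -- integrability of the two comparison functions
  have hintA : ∀ a b : ℝ, a ≤ b →
      IntegrableOn (fun u : ℝ => C * ‖x‖ ^ (-D) * u ^ (2:ℝ)) (Ioc a b) := by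
    intro a b hab
    have h := intervalIntegral.intervalIntegrable_rpow' (a := a) (b := b)
      (by norm_num : (-1:ℝ) < 2)
    rw [intervalIntegrable_iff, uIoc_of_le hab] at h
    exact h.const_mul _
  have h2 : (1:ℝ) < 1/β := by rw [lt_div_iff₀ hβ]; linarith
  have hintB : ∀ a b : ℝ, 0 < a → a ≤ b →
      IntegrableOn (fun u : ℝ => C * u ^ (-(1/β))) (Ioc a b) := by
    intro a b ha hab
    have h := intervalIntegral.intervalIntegrable_rpow (μ := volume) (a := a) (b := b) (r := -(1/β))
      (Or.inr (notMem_uIcc_of_lt ha (by linarith : (0:ℝ) < b)))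
    rw [intervalIntegrable_iff, uIoc_of_le hab] at h
    exact h.const_mul _
  set X : ℝ := ‖x‖ ^ (-(α*(1-β)/β)) with hXdef
  have hX0 : 0 ≤ X := Real.rpow_nonneg (norm_nonneg x) _
  by_cases hx1 : ‖x‖ ≤ 1
  · -- small x
    rw [if_pos hx1]
    set t : ℝ := ‖x‖ ^ α with htdef
    have ht0 : 0 < t := Real.rpow_pos_of_pos hx α
    have ht1 : t ≤ 1 := Real.rpow_le_one (norm_nonneg x) hx1 hα.le
    have hsplit : (∫ u in Ioc (0:ℝ) 1, g u) =
        (∫ u in Ioc (0:ℝ) t, g u) + ∫ u in Ioc t 1, g u := by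
      rw [← Ioc_union_Ioc_eq_Ioc ht0.le ht1]
      exact setIntegral_union (Ioc_disjoint_Ioc_of_le le_rfl) measurableSet_Ioc
        (hg_int.mono_set (Ioc_subset_Ioc le_rfl ht1))
        (hg_int.mono_set (Ioc_subset_Ioc ht0.le le_rfl))
    have p1 : (∫ u in Ioc (0:ℝ) t, g u) ≤ ∫ u in Ioc (0:ℝ) t, C * ‖x‖ ^ (-D) * u ^ (2:ℝ) :=
      setIntegral_mono_on (hg_int.mono_set (Ioc_subset_Ioc le_rfl ht1))
        (hintA 0 t ht0.le) measurableSet_Ioc (fun u _ => min_le_left _ _)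
    have v1 : (∫ u in Ioc (0:ℝ) t, C * ‖x‖ ^ (-D) * u ^ (2:ℝ)) =
        C * ‖x‖ ^ (-D) * (t ^ (3:ℝ) / 3) := by
      rw [integral_const_mul, ← intervalIntegral.integral_of_le ht0.le,
        integral_rpow (Or.inl (by norm_num : (-1:ℝ) < 2)),
        Real.zero_rpow (by norm_num : (2:ℝ)+1 ≠ 0)]
      norm_num
    have p2 : (∫ u in Ioc t 1, g u) ≤ ∫ u in Ioc t 1, C * u ^ (-(1/β)) :=
      setIntegral_mono_on (hg_int.mono_set (Ioc_subset_Ioc ht0.le le_rfl))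
        (hintB t 1 ht0 ht1) measurableSet_Ioc (fun u _ => min_le_right _ _)
    have hrne : -(1/β) ≠ -1 := by
      intro h
      have := neg_injective h
      linarith
    have v2 : (∫ u in Ioc t 1, C * u ^ (-(1/β))) =
        C * ((1 - t ^ (-(1/β)+1)) / (-(1/β)+1)) := by
      rw [integral_const_mul, ← intervalIntegral.integral_of_le ht1,
        integral_rpow (Or.inr ⟨hrne, notMem_uIcc_of_lt ht0 one_pos⟩), Real.one_rpow]
    set T : ℝ := t ^ (-(1/β)+1) with hTdef
    have hT1 : (1:ℝ) ≤ T :=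
      Real.one_le_rpow_of_pos_of_le_one_of_nonpos ht0 ht1 (by linarith)
    have hTX : T = X := by
      rw [hTdef, htdef, ← Real.rpow_mul (norm_nonneg x), hXdef]
      congr 1
      field_simp
      ring
    have htX : ‖x‖ ^ (-D) * t ^ (3:ℝ) = X := by
      rw [htdef, ← Real.rpow_mul (norm_nonneg x), ← Real.rpow_add hx, hXdef]
      congr 1
      rw [hD, hcrit]
      field_simp
      ring
    have hb2 : (1 - T)/(-(1/β)+1) ≤ β/(1-β) * T := by
      have hb1 : (1:ℝ) - β ≠ 0 := by linarith
      have hA : -(1/β)+1 < 0 := by linarith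
      rw [div_le_iff_of_neg hA]
      have hkey : β/(1-β)*T*(-(1/β)+1) = -T := by
        field_simp
        ring
      rw [hkey]
      linarith
    calc (∫ u in Ioc (0 : ℝ) 1, p u x * u) ≤ ∫ u in Ioc (0:ℝ) 1, g u := hmono
      _ = (∫ u in Ioc (0:ℝ) t, g u) + ∫ u in Ioc t 1, g u := hsplit
      _ ≤ C * ‖x‖ ^ (-D) * (t ^ (3:ℝ) / 3) + C * ((1 - T) / (-(1/β)+1)) := by
          rw [← v1, ← v2]; exact add_le_add p1 p2
      _ ≤ C * ‖x‖ ^ (-D) * (t ^ (3:ℝ) / 3) + C * (β/(1-β) * T) := by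
          have := mul_le_mul_of_nonneg_left hb2 hC
          linarith
      _ = (C/3) * (‖x‖ ^ (-D) * t ^ (3:ℝ)) + C*β/(1-β) * T := by ring
      _ = (C/3 + C*β/(1-β)) * X := by rw [htX, hTX]; ring
  · -- big x
    rw [if_neg hx1]
    have p1 : (∫ u in Ioc (0:ℝ) 1, g u) ≤ ∫ u in Ioc (0:ℝ) 1, C * ‖x‖ ^ (-D) * u ^ (2:ℝ) :=
      setIntegral_mono_on hg_int (hintA 0 1 zero_le_one) measurableSet_Ioc
        (fun u _ => min_le_left _ _)
    have v1 : (∫ u in Ioc (0:ℝ) 1, C * ‖x‖ ^ (-D) * u ^ (2:ℝ)) =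
        C * ‖x‖ ^ (-D) * (1 / 3) := by
      rw [integral_const_mul, ← intervalIntegral.integral_of_le zero_le_one,
        integral_rpow (Or.inl (by norm_num : (-1:ℝ) < 2)),
        Real.zero_rpow (by norm_num : (2:ℝ)+1 ≠ 0), Real.one_rpow]
      norm_num
    have hxD0 : (0:ℝ) ≤ ‖x‖ ^ (-D) := Real.rpow_nonneg (norm_nonneg x) _
    calc (∫ u in Ioc (0 : ℝ) 1, p u x * u) ≤ ∫ u in Ioc (0:ℝ) 1, g u := hmono
      _ ≤ C * ‖x‖ ^ (-D) * (1/3) := p1.trans_eq v1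
      _ ≤ (C/3 + C*β/(1-β)) * ‖x‖ ^ (-D) := by
          have h3 : 0 ≤ C*β/(1-β) := by positivity
          nlinarith
end


end Stmt3Aux

open Stmt3Aux in
theorem stmt_3 (d : ℕ) (α β C : ℝ) (hα : 0 < α) (hdα : α < (d : ℝ))
    (hβ : 0 < β) (hβ1 : β < 1) (hcrit : (d : ℝ) = α * (1 + β) / β)
    (p : ℝ → EuclideanSpace ℝ (Fin d) → ℝ)
    (hp_meas : ∀ u, Measurable (p u))
    (hp_nonneg : ∀ u x, 0 ≤ p u x)
    (hself : ∀ a u : ℝ, 0 < a → 0 < u → ∀ x,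
      p (a * u) x = a ^ (-((d : ℝ) / α)) * p u ((a ^ (-(1 / α)) : ℝ) • x))
    (hbound : ∀ x, p 1 x ≤ C / (1 + ‖x‖ ^ ((d : ℝ) + α))) :
    ∫⁻ x, ENNReal.ofReal ((∫ u in Ioc (0 : ℝ) 1, p u x * u) ^ (1 + β)) < ⊤ := by
  have hβ' : (0:ℝ) < 1 - β := by linarith
  have hd0 : (0:ℝ) < d := hα.trans hdα
  have hd : 0 < d := by exact_mod_cast hd0
  haveI : Nonempty (Fin d) := ⟨⟨0, hd⟩⟩
  haveI : Nontrivial (EuclideanSpace ℝ (Fin d)) := inferInstance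
  have hC : 0 ≤ C := by
    have h := hbound 0
    rw [norm_zero, Real.zero_rpow (by positivity : (d:ℝ) + α ≠ 0)] at h
    simpa using (hp_nonneg 1 0).trans h
  set K : ℝ := C/3 + C*β/(1-β) with hKdef
  have hK : 0 ≤ K := by positivity
  set γ : ℝ := α*(1-β)/β with hγdef
  set D : ℝ := (d:ℝ) + α with hDdef
  have hγ0 : 0 < γ := by positivity
  have hγd : γ*(1+β) < (d:ℝ) := by
    rw [hγdef, hcrit]
    rw [div_mul_eq_mul_div, div_lt_div_iff₀ hβ hβ]
    have hpos : 0 < α*β*β*(1+β) := by positivity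
    nlinarith
  have hD'0 : 0 < D*(1+β) := by positivity
  have hD'd : (d:ℝ) < D*(1+β) := by
    have h1 : 0 < (d:ℝ)*β := by positivity
    have h2 : 0 < α*β := by positivity
    rw [hDdef]
    nlinarith
  set G : EuclideanSpace ℝ (Fin d) → ℝ≥0∞ := fun x =>
    if ‖x‖ < 1 then ENNReal.ofReal (K^(1+β)) * ENNReal.ofReal (‖x‖ ^ (-(γ*(1+β))))
    else ENNReal.ofReal (K^(1+β)) * ENNReal.ofReal (‖x‖ ^ (-(D*(1+β)))) with hGdef
  have h0 : ∀ᵐ x : EuclideanSpace ℝ (Fin d), x ≠ 0 := by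
    rw [ae_iff]
    rw [show {x : EuclideanSpace ℝ (Fin d) | ¬ x ≠ 0} = {0} by ext y; simp]
    exact measure_singleton 0
  have hae : ∀ᵐ x : EuclideanSpace ℝ (Fin d),
      ENNReal.ofReal ((∫ u in Ioc (0 : ℝ) 1, p u x * u) ^ (1 + β)) ≤ G x := by
    filter_upwards [h0] with x hx0
    have hxpos : 0 < ‖x‖ := norm_pos_iff.2 hx0
    have hb := inner_bound hα hdα hβ hβ1 hcrit p hp_meas hp_nonneg hself hbound x hxpos
    have hΦ0 : 0 ≤ ∫ u in Ioc (0 : ℝ) 1, p u x * u :=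
      setIntegral_nonneg measurableSet_Ioc fun u hu => mul_nonneg (hp_nonneg u x) hu.1.le
    have key : ∀ s : ℝ, (∫ u in Ioc (0 : ℝ) 1, p u x * u) ≤ K * ‖x‖ ^ (-s) →
        ENNReal.ofReal ((∫ u in Ioc (0 : ℝ) 1, p u x * u) ^ (1 + β)) ≤
        ENNReal.ofReal (K^(1+β)) * ENNReal.ofReal (‖x‖ ^ (-(s*(1+β)))) := by
      intro s hs
      rw [← ENNReal.ofReal_mul (by positivity)]
      refine ENNReal.ofReal_le_ofReal ?_
      calc (∫ u in Ioc (0 : ℝ) 1, p u x * u) ^ (1+β)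
          ≤ (K * ‖x‖ ^ (-s)) ^ (1+β) :=
            Real.rpow_le_rpow hΦ0 hs (by linarith)
        _ = K^(1+β) * ‖x‖ ^ (-(s*(1+β))) := by
            rw [Real.mul_rpow hK (Real.rpow_nonneg (norm_nonneg x) _),
              ← Real.rpow_mul (norm_nonneg x), neg_mul]
    by_cases hx1 : ‖x‖ < 1
    · rw [hGdef]
      simp only [if_pos hx1]
      rw [if_pos hx1.le] at hb
      exact key γ hb
    · rw [hGdef]
      simp only [if_neg hx1]
      push_neg at hx1
      have hb' : (∫ u in Ioc (0 : ℝ) 1, p u x * u) ≤ K * ‖x‖ ^ (-D) := by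
        rcases eq_or_lt_of_le hx1 with heq | hlt
        · rw [if_pos (le_of_eq heq.symm)] at hb
          rw [← heq] at hb ⊢
          simpa [Real.one_rpow] using hb
        · rw [if_neg (not_le.2 hlt)] at hb
          exact hb
      exact key D hb'
  refine lt_of_le_of_lt (lintegral_mono_ae hae) ?_
  rw [← lintegral_add_compl G (measurableSet_ball (x := (0:EuclideanSpace ℝ (Fin d))) (ε := 1))]
  have hball : (∫⁻ x : EuclideanSpace ℝ (Fin d) in Metric.ball 0 1, G x) < ⊤ := by
    have hcong : (∫⁻ x : EuclideanSpace ℝ (Fin d) in Metric.ball 0 1, G x) =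
        ∫⁻ x : EuclideanSpace ℝ (Fin d) in Metric.ball 0 1,
          ENNReal.ofReal (K^(1+β)) * ENNReal.ofReal (‖x‖ ^ (-(γ*(1+β)))) := by
      refine setLIntegral_congr_fun measurableSet_ball (fun x hx => ?_)
      rw [hGdef]
      simp only [if_pos (mem_ball_zero_iff.1 hx)]
    rw [hcong, lintegral_const_mul' _ _ ENNReal.ofReal_ne_top]
    exact ENNReal.mul_lt_top ENNReal.ofReal_lt_top (fin_ball _ (by positivity) hγd)
  have hcompl : (∫⁻ x : EuclideanSpace ℝ (Fin d) in (Metric.ball 0 1)ᶜ, G x) < ⊤ := by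
    have hcong : (∫⁻ x : EuclideanSpace ℝ (Fin d) in (Metric.ball 0 1)ᶜ, G x) =
        ∫⁻ x : EuclideanSpace ℝ (Fin d) in (Metric.ball 0 1)ᶜ,
          ENNReal.ofReal (K^(1+β)) * ENNReal.ofReal (‖x‖ ^ (-(D*(1+β)))) := by
      refine setLIntegral_congr_fun measurableSet_ball.compl (fun x hx => ?_)
      rw [hGdef]
      have : ¬ ‖x‖ < 1 := by
        simp only [mem_compl_iff, Metric.mem_ball, dist_zero_right, not_lt] at hx
        linarith
      simp only [if_neg this]
    rw [hcong, lintegral_const_mul' _ _ ENNReal.ofReal_ne_top]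
    exact ENNReal.mul_lt_top ENNReal.ofReal_lt_top (fin_compl _ hD'0 hD'd)
  exact ENNReal.add_lt_top.2 ⟨hball, hcompl⟩
end

section
/- Let d > α > 0. If φ : ℝ^d → ℝ is measurable and sup_{x∈ℝ^d} (1+|x|^p)|φ(x)| < ∞ for some p > d, then the function Gφ(x) = C_{α,d} ∫_{ℝ^d} φ(y)/|x−y|^{d−α} dy satisfies sup_{x∈ℝ^d} (1+|x|^{d−α})|Gφ(x)| < ∞, where C_{α,d} = Γ((d−α)/2) / (2^α π^{d/2} Γ(α/2)). -/
set_option maxHeartbeats 1000000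

open MeasureTheory Real Set Metric
open scoped ENNReal NNReal

lemma riesz_ball_bound (d : ℕ) (β : ℝ) (hβ0 : 0 < β) (hβd : β < d) :
    ∃ K : ℝ≥0∞, K ≠ ⊤ ∧ ∀ r : ℝ, 0 < r →
      (∫⁻ y in Metric.ball (0 : EuclideanSpace ℝ (Fin d)) r, ENNReal.ofReal (‖y‖ ^ (-β))) ≤
        ENNReal.ofReal (r ^ ((d : ℝ) - β)) * K := by
  have hd : 0 < d := by exact_mod_cast hβ0.trans hβd
  haveI : Nonempty (Fin d) := ⟨⟨0, hd⟩⟩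
  haveI : Nontrivial (EuclideanSpace ℝ (Fin d)) :=
    inferInstanceAs (Nontrivial (PiLp 2 fun _ : Fin d => ℝ))
  set v : ℝ≥0∞ := volume (ball (0 : EuclideanSpace ℝ (Fin d)) 1) with hv_def
  have hv : v ≠ ⊤ := measure_ball_lt_top.ne
  set q : ℝ := ((1 : ℝ) / 2) ^ ((d : ℝ) - β) with hq_def
  have hq0 : 0 < q := Real.rpow_pos_of_pos (by norm_num) _
  have hq1 : q < 1 := Real.rpow_lt_one (by norm_num) (by norm_num) (by linarith)
  have hsum : (∑' n : ℕ, (ENNReal.ofReal q) ^ n) = (1 - ENNReal.ofReal q)⁻¹ :=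
    ENNReal.tsum_geometric _
  have hsum_ne : (1 - ENNReal.ofReal q)⁻¹ ≠ ⊤ := by
    rw [Ne, ENNReal.inv_eq_top, tsub_eq_zero_iff_le]
    exact fun h => absurd (ENNReal.ofReal_lt_one.2 hq1) (not_lt.2 h)
  refine ⟨ENNReal.ofReal (2 ^ β) * ((1 - ENNReal.ofReal q)⁻¹ * v), ?_, ?_⟩
  · exact ENNReal.mul_ne_top ENNReal.ofReal_ne_top (ENNReal.mul_ne_top hsum_ne hv)
  intro r hr
  set c : ℕ → ℝ := fun n => r * (1 / 2) ^ n with hc_def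
  have hcpos : ∀ n, 0 < c n := fun n => by positivity
  set A : ℕ → _root_.Set (EuclideanSpace ℝ (Fin d)) := fun n => {y : EuclideanSpace ℝ (Fin d) | c (n + 1) ≤ ‖y‖} ∩ ball 0 (c n) with hA_def
  have hcover : ball (0 : EuclideanSpace ℝ (Fin d)) r ⊆ (⋃ n, A n) ∪ {0} := by
    intro y hy
    rcases eq_or_ne y 0 with h0 | h0
    · exact Or.inr (by simp [h0])
    left
    have hy0 : 0 < ‖y‖ := norm_pos_iff.2 h0
    have hyr : ‖y‖ < r := by simpa using mem_ball_zero_iff.1 hy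
    have hex : ∃ n : ℕ, c (n + 1) ≤ ‖y‖ := by
      obtain ⟨n, hn⟩ := exists_pow_lt_of_lt_one (div_pos hy0 hr) (by norm_num : (1:ℝ)/2 < 1)
      refine ⟨n, ?_⟩
      have : c (n + 1) ≤ r * ((1:ℝ)/2) ^ n := by
        simp only [hc_def, pow_succ]
        nlinarith [pow_pos (by norm_num : (0:ℝ) < 1/2) n]
      calc c (n+1) ≤ r * ((1:ℝ)/2) ^ n := this
        _ ≤ r * (‖y‖ / r) := by nlinarith
        _ = ‖y‖ := by field_simp
    classical
    refine mem_iUnion.2 ⟨Nat.find hex, Nat.find_spec hex, ?_⟩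
    rw [mem_ball_zero_iff]
    rcases Nat.eq_zero_or_pos (Nat.find hex) with hf | hf
    · simp only [hf, hc_def, pow_zero, mul_one]
      exact hyr
    · have h := Nat.find_min hex (Nat.sub_lt hf one_pos)
      rw [not_le] at h
      have he : Nat.find hex - 1 + 1 = Nat.find hex := by omega
      rwa [he] at h
  have hmeas_g : Measurable fun y : EuclideanSpace ℝ (Fin d) => ENNReal.ofReal (‖y‖ ^ (-β)) := by
    fun_prop
  calc
    (∫⁻ y in Metric.ball (0 : EuclideanSpace ℝ (Fin d)) r, ENNReal.ofReal (‖y‖ ^ (-β)))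
        ≤ ∫⁻ y in (⋃ n, A n) ∪ {0}, ENNReal.ofReal (‖y‖ ^ (-β)) :=
          lintegral_mono_set hcover
    _ ≤ (∫⁻ y in ⋃ n, A n, ENNReal.ofReal (‖y‖ ^ (-β)))
          + ∫⁻ y in ({0} : Set (EuclideanSpace ℝ (Fin d))), ENNReal.ofReal (‖y‖ ^ (-β)) := lintegral_union_le _ _ _
    _ = ∫⁻ y in ⋃ n, A n, ENNReal.ofReal (‖y‖ ^ (-β)) := by
          rw [lintegral_singleton]
          simp [Real.zero_rpow (neg_ne_zero.2 hβ0.ne')]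
    _ ≤ ∑' n, ∫⁻ y in A n, ENNReal.ofReal (‖y‖ ^ (-β)) := lintegral_iUnion_le _ _
    _ ≤ ∑' n, ENNReal.ofReal (r ^ ((d : ℝ) - β) * (2 ^ β * q ^ n)) * v := by
        refine ENNReal.tsum_le_tsum fun n => ?_
        have h1 : (∫⁻ y in A n, ENNReal.ofReal (‖y‖ ^ (-β)))
            ≤ ∫⁻ _ in A n, ENNReal.ofReal (c (n+1) ^ (-β)) := by
          refine setLIntegral_mono measurable_const fun y hy => ?_
          exact ENNReal.ofReal_le_ofReal
            (Real.rpow_le_rpow_of_nonpos (hcpos (n+1)) hy.1 (by linarith))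
        refine h1.trans ?_
        rw [setLIntegral_const]
        have h2 : volume (A n) ≤ ENNReal.ofReal (c n ^ d) * v := by
          refine (measure_mono inter_subset_right).trans ?_
          rw [Measure.addHaar_ball _ _ (hcpos n).le, finrank_euclideanSpace_fin]
        calc ENNReal.ofReal (c (n+1) ^ (-β)) * volume (A n)
            ≤ ENNReal.ofReal (c (n+1) ^ (-β)) * (ENNReal.ofReal (c n ^ d) * v) := by
              exact mul_le_mul_right h2 _
          _ = ENNReal.ofReal (c (n+1) ^ (-β) * c n ^ d) * v := by
              rw [ENNReal.ofReal_mul (Real.rpow_nonneg (hcpos (n+1)).le _), mul_assoc]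
          _ = ENNReal.ofReal (r ^ ((d : ℝ) - β) * (2 ^ β * q ^ n)) * v := by
              have hs : (0:ℝ) < r * (1/2) ^ n := hcpos n
              have key : c (n+1) ^ (-β) * c n ^ d
                  = r ^ ((d : ℝ) - β) * (2 ^ β * q ^ n) := by
                have e1 : c (n + 1) = (r * (1/2) ^ n) * (1/2) := by
                  simp only [hc_def]; rw [pow_succ]; ring
                have e2 : (c n : ℝ) ^ d = (r * (1/2) ^ n) ^ ((d : ℝ)) := by
                  rw [← Real.rpow_natCast (c n) d]
                have e3 : ((r * (1/2) ^ n) * (1/2)) ^ (-β)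
                    = (r * (1/2)^n) ^ (-β) * ((1:ℝ)/2) ^ (-β) := by
                  exact Real.mul_rpow hs.le (by norm_num)
                rw [e1, e2, e3]
                have e4 : (r * (1/2)^n) ^ (-β) * ((1:ℝ)/2) ^ (-β) * (r * (1/2) ^ n) ^ ((d:ℝ))
                    = (r * (1/2)^n) ^ ((d:ℝ) - β) * ((1:ℝ)/2) ^ (-β) := by
                  rw [mul_right_comm, ← Real.rpow_add hs]
                  ring_nf
                rw [e4]
                have e5' : (((1:ℝ)/2) ^ n : ℝ) ^ ((d:ℝ) - β) = q ^ n := by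
                  rw [← Real.rpow_natCast ((1:ℝ)/2) n,
                    ← Real.rpow_mul (by norm_num : (0:ℝ) ≤ 1/2), mul_comm,
                    Real.rpow_mul (by norm_num : (0:ℝ) ≤ 1/2), Real.rpow_natCast]
                have e5 : (r * (1/2)^n) ^ ((d:ℝ) - β)
                    = r ^ ((d:ℝ) - β) * q ^ n := by
                  rw [Real.mul_rpow hr.le (by positivity), e5']
                have e6 : ((1:ℝ)/2) ^ (-β) = 2 ^ β := by
                  rw [one_div, Real.inv_rpow (by norm_num), Real.rpow_neg (by norm_num)]
                  simp
                rw [e5, e6]; ring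
              rw [key]
    _ = ENNReal.ofReal (r ^ ((d : ℝ) - β)) *
          (ENNReal.ofReal (2 ^ β) * ((1 - ENNReal.ofReal q)⁻¹ * v)) := by
        have hrw : ∀ n : ℕ, ENNReal.ofReal (r ^ ((d : ℝ) - β) * (2 ^ β * q ^ n)) * v
            = (ENNReal.ofReal (r ^ ((d : ℝ) - β)) * ENNReal.ofReal (2 ^ β) * v)
              * (ENNReal.ofReal q) ^ n := by
          intro n
          rw [ENNReal.ofReal_mul (Real.rpow_nonneg hr.le _),
            ENNReal.ofReal_mul (Real.rpow_nonneg (by norm_num) _),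
            ← ENNReal.ofReal_pow hq0.le]
          ring
        simp_rw [hrw]
        rw [ENNReal.tsum_mul_left, hsum]
        ring
theorem stmt_4 (d : ℕ) (α : ℝ) (hα : 0 < α) (hdα : α < (d : ℝ))
    (φ : EuclideanSpace ℝ (Fin d) → ℝ) (hφ : Measurable φ)
    (p : ℝ) (hp : (d : ℝ) < p)
    (hdecay : ∃ C, ∀ x, (1 + ‖x‖ ^ p) * |φ x| ≤ C) :
    ∃ C', ∀ x, (1 + ‖x‖ ^ ((d : ℝ) - α)) *
      |Real.Gamma (((d : ℝ) - α) / 2) /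
          (2 ^ α * Real.pi ^ ((d : ℝ) / 2) * Real.Gamma (α / 2)) *
        ∫ y, φ y / ‖x - y‖ ^ ((d : ℝ) - α)| ≤ C' := by
  classical
  obtain ⟨C, hC⟩ := hdecay
  set β : ℝ := (d : ℝ) - α with hβ_def
  have hβ0 : 0 < β := by simp only [hβ_def]; linarith
  have hβd : β < d := by simp only [hβ_def]; linarith
  have hd0 : (0 : ℝ) < d := hα.trans hdα
  have hp0 : 0 < p := hd0.trans hp
  obtain ⟨K, hK, hKball⟩ := riesz_ball_bound d β hβ0 hβd
  have hC0 : 0 ≤ C := le_trans (by positivity) (hC 0)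
  have hφ1 : ∀ y, |φ y| ≤ C := by
    intro y
    have h := hC y
    nlinarith [abs_nonneg (φ y), Real.rpow_nonneg (norm_nonneg y) p]
  have hφ2 : ∀ y : EuclideanSpace ℝ (Fin d), ‖y‖ ^ p * |φ y| ≤ C := by
    intro y
    have h := hC y
    nlinarith [abs_nonneg (φ y)]
  -- the dominating kernel
  set g : EuclideanSpace ℝ (Fin d) → EuclideanSpace ℝ (Fin d) → ℝ≥0∞ :=
    fun x y => ENNReal.ofReal |φ y| * ENNReal.ofReal (‖x - y‖ ^ (-β)) with hg_def
  have hgmeas : ∀ x, Measurable (g x) := by intro x; fun_prop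
  -- pointwise identification of the norm of the integrand
  have key : ∀ x y, ENNReal.ofReal ‖φ y / ‖x - y‖ ^ β‖ = g x y := by
    intro x y
    have hdiv : |φ y| / ‖x - y‖ ^ β = |φ y| * ‖x - y‖ ^ (-β) := by
      rw [Real.rpow_neg (norm_nonneg _), div_eq_mul_inv]
    rw [Real.norm_eq_abs, abs_div, abs_of_nonneg (Real.rpow_nonneg (norm_nonneg _) β),
      hdiv, ENNReal.ofReal_mul (abs_nonneg _)]
  -- total mass of |φ|
  set M : ℝ≥0∞ := ∫⁻ y : EuclideanSpace ℝ (Fin d), ENNReal.ofReal |φ y| with hM_def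
  have hφ3 : ∀ y : EuclideanSpace ℝ (Fin d), |φ y| ≤ C * 2 ^ p * (1 + ‖y‖) ^ (-p) := by
    intro y
    have ha : (0 : ℝ) < 1 + ‖y‖ ^ p := by positivity
    have hb : (0 : ℝ) < (1 + ‖y‖) ^ p := Real.rpow_pos_of_pos (by positivity) p
    have h1 : (1 + ‖y‖) ^ p ≤ 2 ^ p * (1 + ‖y‖ ^ p) := by
      have hmax : 1 + ‖y‖ ≤ 2 * max 1 ‖y‖ := by
        rcases le_total ‖y‖ 1 with h | h
        · rw [max_eq_left h]; linarith
        · rw [max_eq_right h]; linarith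
      have h2 : (1 + ‖y‖) ^ p ≤ (2 * max 1 ‖y‖) ^ p :=
        Real.rpow_le_rpow (by positivity) hmax hp0.le
      have h3 : (2 * max 1 ‖y‖ : ℝ) ^ p = 2 ^ p * (max 1 ‖y‖) ^ p :=
        Real.mul_rpow (by norm_num) (le_max_of_le_left zero_le_one)
      have h4 : (max 1 ‖y‖ : ℝ) ^ p ≤ 1 + ‖y‖ ^ p := by
        rcases le_total ‖y‖ 1 with h | h
        · rw [max_eq_left h, Real.one_rpow]
          have := Real.rpow_nonneg (norm_nonneg y) p
          linarith
        · rw [max_eq_right h]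
          have := Real.rpow_nonneg (norm_nonneg y) p
          linarith [Real.rpow_le_rpow (norm_nonneg y) (le_refl ‖y‖) hp0.le]
      calc (1 + ‖y‖) ^ p ≤ 2 ^ p * (max 1 ‖y‖) ^ p := by rw [← h3]; exact h2
        _ ≤ 2 ^ p * (1 + ‖y‖ ^ p) := by
            have h2p : (0:ℝ) < 2 ^ p := Real.rpow_pos_of_pos (by norm_num) p
            nlinarith
    have hφy : |φ y| ≤ C / (1 + ‖y‖ ^ p) := by
      rw [le_div_iff₀ ha]
      linarith [hC y]
    have hφy' : |φ y| * (1 + ‖y‖ ^ p) ≤ C := by rw [mul_comm]; exact hC y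
    rw [Real.rpow_neg (by positivity : (0:ℝ) ≤ 1 + ‖y‖), ← div_eq_mul_inv,
      le_div_iff₀ hb]
    calc |φ y| * (1 + ‖y‖) ^ p ≤ |φ y| * (2 ^ p * (1 + ‖y‖ ^ p)) := by
          nlinarith [abs_nonneg (φ y)]
      _ = 2 ^ p * (|φ y| * (1 + ‖y‖ ^ p)) := by ring
      _ ≤ 2 ^ p * C := by
          have h2p : (0:ℝ) < 2 ^ p := Real.rpow_pos_of_pos (by norm_num) p
          nlinarith
      _ = C * 2 ^ p := mul_comm _ _
  have hMfin : M ≠ ⊤ := by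
    have hle : M ≤ ENNReal.ofReal (C * 2 ^ p) *
        ∫⁻ y : EuclideanSpace ℝ (Fin d), ENNReal.ofReal ((1 + ‖y‖) ^ (-p)) := by
      have step : M ≤ ∫⁻ y : EuclideanSpace ℝ (Fin d),
          ENNReal.ofReal (C * 2 ^ p) * ENNReal.ofReal ((1 + ‖y‖) ^ (-p)) := by
        refine lintegral_mono fun y => ?_
        rw [← ENNReal.ofReal_mul (by positivity)]
        exact ENNReal.ofReal_le_ofReal (hφ3 y)
      refine step.trans ?_
      rw [lintegral_const_mul _ (by fun_prop)]
    have hfin : (∫⁻ y : EuclideanSpace ℝ (Fin d), ENNReal.ofReal ((1 + ‖y‖) ^ (-p))) < ⊤ := by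
      apply finite_integral_one_add_norm
      rw [finrank_euclideanSpace_fin]
      exact hp
    exact (hle.trans_lt (ENNReal.mul_lt_top ENNReal.ofReal_lt_top hfin)).ne
  -- translated ball bound
  have htrans : ∀ (x : EuclideanSpace ℝ (Fin d)) (r : ℝ), 0 < r →
      (∫⁻ y in Metric.ball x r, ENNReal.ofReal (‖x - y‖ ^ (-β))) ≤
        ENNReal.ofReal (r ^ ((d : ℝ) - β)) * K := by
    intro x r hr
    have hmp : MeasurePreserving (fun y : EuclideanSpace ℝ (Fin d) => x - y) volume volume :=
      Measure.measurePreserving_sub_left volume x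
    have hG0 : Measurable fun z : EuclideanSpace ℝ (Fin d) =>
        (Metric.ball (0 : EuclideanSpace ℝ (Fin d)) r).indicator
          (fun z => ENNReal.ofReal (‖z‖ ^ (-β))) z :=
      Measurable.indicator (by fun_prop) measurableSet_ball
    have heq : (∫⁻ y in Metric.ball x r, ENNReal.ofReal (‖x - y‖ ^ (-β))) =
        ∫⁻ z in Metric.ball (0 : EuclideanSpace ℝ (Fin d)) r, ENNReal.ofReal (‖z‖ ^ (-β)) := by
      rw [← lintegral_indicator measurableSet_ball, ← lintegral_indicator measurableSet_ball]
      rw [← hmp.lintegral_comp hG0]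
      congr 1
      funext y
      by_cases hy : y ∈ Metric.ball x r
      · have hy' : x - y ∈ Metric.ball (0 : EuclideanSpace ℝ (Fin d)) r := by
          rw [mem_ball_zero_iff]
          rw [Metric.mem_ball, dist_eq_norm] at hy
          rwa [norm_sub_rev] at hy
        rw [Set.indicator_of_mem hy, Set.indicator_of_mem hy']
      · have hy' : x - y ∉ Metric.ball (0 : EuclideanSpace ℝ (Fin d)) r := by
          rw [mem_ball_zero_iff]
          rw [Metric.mem_ball, dist_eq_norm, norm_sub_rev] at hy
          exact hy
        rw [Set.indicator_of_notMem hy, Set.indicator_of_notMem hy']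
    rw [heq]
    exact hKball r hr
  set L : EuclideanSpace ℝ (Fin d) → ℝ≥0∞ := fun x => ∫⁻ y, g x y with hL_def
  -- uniform bound
  set AA : ℝ≥0∞ := ENNReal.ofReal C * K + M with hAA_def
  have hAAfin : AA ≠ ⊤ :=
    ENNReal.add_ne_top.2 ⟨ENNReal.mul_ne_top ENNReal.ofReal_ne_top hK, hMfin⟩
  have boundA : ∀ x, L x ≤ AA := by
    intro x
    rw [hL_def]
    simp only
    rw [← lintegral_add_compl (g x) (measurableSet_ball (x := x) (ε := 1))]
    refine add_le_add ?_ ?_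
    · have step1 : (∫⁻ y in Metric.ball x 1, g x y) ≤
          ∫⁻ y in Metric.ball x 1, ENNReal.ofReal C * ENNReal.ofReal (‖x - y‖ ^ (-β)) := by
        refine setLIntegral_mono (by fun_prop) fun y _ => ?_
        exact mul_le_mul_left (ENNReal.ofReal_le_ofReal (hφ1 y)) _
      refine step1.trans ?_
      rw [lintegral_const_mul _ (by fun_prop)]
      have := htrans x 1 one_pos
      rw [Real.one_rpow, ENNReal.ofReal_one, one_mul] at this
      exact mul_le_mul_right this _
    · have step1 : (∫⁻ y in (Metric.ball x 1)ᶜ, g x y) ≤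
          ∫⁻ y in (Metric.ball x 1)ᶜ, ENNReal.ofReal |φ y| := by
        refine setLIntegral_mono (by fun_prop) fun y hy => ?_
        have h1 : (1 : ℝ) ≤ ‖x - y‖ := by
          simp only [Metric.mem_ball, not_lt, mem_compl_iff] at hy
          rw [dist_eq_norm, norm_sub_rev] at hy
          exact hy
        have h2 : ‖x - y‖ ^ (-β) ≤ 1 :=
          Real.rpow_le_one_of_one_le_of_nonpos h1 (by linarith)
        calc g x y ≤ ENNReal.ofReal |φ y| * ENNReal.ofReal 1 :=
              mul_le_mul_right (ENNReal.ofReal_le_ofReal h2) _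
          _ = ENNReal.ofReal |φ y| := by rw [ENNReal.ofReal_one, mul_one]
      exact step1.trans (setLIntegral_le_lintegral _ _)
  -- decay bound
  set B : ℝ≥0∞ := ENNReal.ofReal (C * 2 ^ (p - α)) * K + ENNReal.ofReal (2 ^ β) * M
    with hB_def
  have hBfin : B ≠ ⊤ :=
    ENNReal.add_ne_top.2 ⟨ENNReal.mul_ne_top ENNReal.ofReal_ne_top hK,
      ENNReal.mul_ne_top ENNReal.ofReal_ne_top hMfin⟩
  have boundB : ∀ x : EuclideanSpace ℝ (Fin d), 1 ≤ ‖x‖ →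
      L x ≤ ENNReal.ofReal (‖x‖ ^ (-β)) * B := by
    intro x hx
    set R : ℝ := ‖x‖ with hR_def
    have hR0 : 0 < R := lt_of_lt_of_le one_pos hx
    have hR2 : 0 < R / 2 := by linarith
    rw [hL_def]
    simp only
    rw [← lintegral_add_compl (g x) (measurableSet_ball (x := x) (ε := R / 2))]
    have part1 : (∫⁻ y in Metric.ball x (R / 2), g x y) ≤
        ENNReal.ofReal (R ^ (-β)) * (ENNReal.ofReal (C * 2 ^ (p - α)) * K) := by
      have hφT : ∀ y ∈ Metric.ball x (R / 2), |φ y| ≤ C * (R / 2) ^ (-p) := by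
        intro y hy
        rw [Metric.mem_ball, dist_eq_norm] at hy
        have hyn : R / 2 ≤ ‖y‖ := by
          have h1 : ‖x‖ - ‖y‖ ≤ ‖x - y‖ := norm_sub_norm_le x y
          have h2 : ‖x - y‖ < R / 2 := by rwa [norm_sub_rev]
          linarith
        have h3 : ‖y‖ ^ (-p) ≤ (R / 2) ^ (-p) :=
          Real.rpow_le_rpow_of_nonpos hR2 hyn (by linarith)
        have h4 : |φ y| ≤ C * ‖y‖ ^ (-p) := by
          have h5 := hφ2 y
          have h6 : (0:ℝ) < ‖y‖ ^ p := Real.rpow_pos_of_pos (lt_of_lt_of_le hR2 hyn) p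
          rw [Real.rpow_neg (norm_nonneg y)]
          rw [mul_comm, inv_mul_eq_div, le_div_iff₀ h6]
          linarith [h5]
        calc |φ y| ≤ C * ‖y‖ ^ (-p) := h4
          _ ≤ C * (R / 2) ^ (-p) := by nlinarith
      have step1 : (∫⁻ y in Metric.ball x (R / 2), g x y) ≤
          ∫⁻ y in Metric.ball x (R / 2),
            ENNReal.ofReal (C * (R / 2) ^ (-p)) * ENNReal.ofReal (‖x - y‖ ^ (-β)) := by
        refine setLIntegral_mono (by fun_prop) fun y hy => ?_
        exact mul_le_mul_left (ENNReal.ofReal_le_ofReal (hφT y hy)) _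
      refine step1.trans ?_
      rw [lintegral_const_mul _ (by fun_prop)]
      have h7 := htrans x (R / 2) hR2
      calc ENNReal.ofReal (C * (R / 2) ^ (-p)) *
            (∫⁻ y in Metric.ball x (R / 2), ENNReal.ofReal (‖x - y‖ ^ (-β)))
          ≤ ENNReal.ofReal (C * (R / 2) ^ (-p)) *
            (ENNReal.ofReal ((R / 2) ^ ((d:ℝ) - β)) * K) := mul_le_mul_right h7 _
        _ = ENNReal.ofReal (C * (R / 2) ^ (-p) * (R / 2) ^ ((d:ℝ) - β)) * K := by
            rw [ENNReal.ofReal_mul (by positivity : (0:ℝ) ≤ C * (R / 2) ^ (-p)),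
              ENNReal.ofReal_mul hC0]
            ring
        _ ≤ ENNReal.ofReal (R ^ (-β) * (C * 2 ^ (p - α))) * K := by
            refine mul_le_mul_left (ENNReal.ofReal_le_ofReal ?_) _
            have e1 : (d:ℝ) - β = α := by rw [hβ_def]; ring
            rw [e1]
            have e2 : C * (R / 2) ^ (-p) * (R / 2) ^ α = C * (R / 2) ^ (α - p) := by
              rw [mul_assoc, ← Real.rpow_add hR2]
              ring_nf
            rw [e2]
            have e3 : (R / 2 : ℝ) ^ (α - p) = R ^ (α - p) * (2:ℝ) ^ (p - α) := by
              rw [div_eq_mul_inv, Real.mul_rpow hR0.le (by positivity),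
                ← Real.rpow_neg_one (2:ℝ), ← Real.rpow_mul (by norm_num)]
              congr 1
              ring
            have e4 : R ^ (α - p) ≤ R ^ (-β) := by
              apply Real.rpow_le_rpow_of_exponent_le hx
              rw [hβ_def]; linarith
            calc C * (R / 2) ^ (α - p) = C * 2 ^ (p - α) * R ^ (α - p) := by
                  rw [e3]; ring
              _ ≤ C * 2 ^ (p - α) * R ^ (-β) :=
                  mul_le_mul_of_nonneg_left e4 (by positivity)
              _ = R ^ (-β) * (C * 2 ^ (p - α)) := by ring
        _ = ENNReal.ofReal (R ^ (-β)) * (ENNReal.ofReal (C * 2 ^ (p - α)) * K) := by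
            rw [ENNReal.ofReal_mul (by positivity), mul_assoc]
    have part2 : (∫⁻ y in (Metric.ball x (R / 2))ᶜ, g x y) ≤
        ENNReal.ofReal (R ^ (-β)) * (ENNReal.ofReal (2 ^ β) * M) := by
      have step1 : (∫⁻ y in (Metric.ball x (R / 2))ᶜ, g x y) ≤
          ∫⁻ y in (Metric.ball x (R / 2))ᶜ,
            ENNReal.ofReal (R ^ (-β) * 2 ^ β) * ENNReal.ofReal |φ y| := by
        refine setLIntegral_mono (by fun_prop) fun y hy => ?_
        have h1 : R / 2 ≤ ‖x - y‖ := by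
          simp only [Metric.mem_ball, not_lt, mem_compl_iff] at hy
          rw [dist_eq_norm, norm_sub_rev] at hy
          exact hy
        have h2 : ‖x - y‖ ^ (-β) ≤ (R / 2) ^ (-β) :=
          Real.rpow_le_rpow_of_nonpos hR2 h1 (by linarith)
        have h3 : (R / 2 : ℝ) ^ (-β) = R ^ (-β) * 2 ^ β := by
          rw [div_eq_mul_inv, Real.mul_rpow hR0.le (by positivity),
            ← Real.rpow_neg_one (2:ℝ), ← Real.rpow_mul (by norm_num)]
          congr 1
          ring
        calc g x y ≤ ENNReal.ofReal |φ y| * ENNReal.ofReal (R ^ (-β) * 2 ^ β) := by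
              refine mul_le_mul_right (ENNReal.ofReal_le_ofReal ?_) _
              rw [← h3]; exact h2
          _ = ENNReal.ofReal (R ^ (-β) * 2 ^ β) * ENNReal.ofReal |φ y| := mul_comm _ _
      refine step1.trans ?_
      rw [lintegral_const_mul _ (by fun_prop)]
      calc ENNReal.ofReal (R ^ (-β) * 2 ^ β) *
            (∫⁻ y in (Metric.ball x (R / 2))ᶜ, ENNReal.ofReal |φ y|)
          ≤ ENNReal.ofReal (R ^ (-β) * 2 ^ β) * M :=
            mul_le_mul_right (setLIntegral_le_lintegral _ _) _
        _ = ENNReal.ofReal (R ^ (-β)) * (ENNReal.ofReal (2 ^ β) * M) := by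
            rw [ENNReal.ofReal_mul (by positivity), mul_assoc]
    calc (∫⁻ y in Metric.ball x (R / 2), g x y) + ∫⁻ y in (Metric.ball x (R / 2))ᶜ, g x y
        ≤ ENNReal.ofReal (R ^ (-β)) * (ENNReal.ofReal (C * 2 ^ (p - α)) * K) +
          ENNReal.ofReal (R ^ (-β)) * (ENNReal.ofReal (2 ^ β) * M) := add_le_add part1 part2
      _ = ENNReal.ofReal (R ^ (-β)) * B := by rw [hB_def]; ring
  -- integrability and relation of lintegral to the integral
  have hint : ∀ x : EuclideanSpace ℝ (Fin d),
      Integrable (fun y => φ y / ‖x - y‖ ^ β) := by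
    intro x
    constructor
    · exact Measurable.aestronglyMeasurable (by fun_prop)
    · rw [hasFiniteIntegral_iff_norm]
      have : (∫⁻ y, ENNReal.ofReal ‖φ y / ‖x - y‖ ^ β‖) = L x := by
        rw [hL_def]
        exact lintegral_congr (key x)
      rw [this]
      exact (boundA x).trans_lt (lt_top_iff_ne_top.2 hAAfin)
  have habs : ∀ x : EuclideanSpace ℝ (Fin d),
      |∫ y, φ y / ‖x - y‖ ^ β| ≤ (L x).toReal := by
    intro x
    have h1 : |∫ y, φ y / ‖x - y‖ ^ β| ≤ ∫ y, ‖φ y / ‖x - y‖ ^ β‖ := by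
      rw [← Real.norm_eq_abs]
      exact norm_integral_le_integral_norm _
    have h2 : (∫ y, ‖φ y / ‖x - y‖ ^ β‖) = (L x).toReal := by
      rw [integral_norm_eq_lintegral_enorm (hint x).aestronglyMeasurable]
      congr 1
      rw [hL_def]
      refine lintegral_congr fun y => ?_
      rw [← key x y, ← ofReal_norm_eq_enorm]
    linarith [h1, h2.le, h2.ge]
  -- conclusion
  set c0 : ℝ := Real.Gamma (β / 2) /
      (2 ^ α * Real.pi ^ ((d : ℝ) / 2) * Real.Gamma (α / 2)) with hc0_def
  refine ⟨|c0| * (2 * AA.toReal) + |c0| * (2 * B.toReal), fun x => ?_⟩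
  have habs2 : (1 + ‖x‖ ^ β) * |c0 * ∫ y, φ y / ‖x - y‖ ^ β| =
      (1 + ‖x‖ ^ β) * (|c0| * |∫ y, φ y / ‖x - y‖ ^ β|) := by rw [abs_mul]
  rw [habs2]
  have hc0n : 0 ≤ |c0| := abs_nonneg _
  have hLx : 0 ≤ |∫ y, φ y / ‖x - y‖ ^ β| := abs_nonneg _
  rcases le_total ‖x‖ 1 with hx | hx
  · have h1 : ‖x‖ ^ β ≤ 1 := Real.rpow_le_one (norm_nonneg x) hx hβ0.le
    have h2 : |∫ y, φ y / ‖x - y‖ ^ β| ≤ AA.toReal :=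
      (habs x).trans (ENNReal.toReal_mono hAAfin (boundA x))
    have h3 : (0:ℝ) ≤ B.toReal := ENNReal.toReal_nonneg
    have h4 : (1 + ‖x‖ ^ β) ≤ 2 := by linarith
    have h5 : (0:ℝ) ≤ 1 + ‖x‖ ^ β := by positivity
    nlinarith [mul_le_mul h4 (mul_le_mul_of_nonneg_left h2 hc0n) (by positivity) (by norm_num)]
  · have hR0 : (0:ℝ) < ‖x‖ := lt_of_lt_of_le one_pos hx
    have h1 : (1:ℝ) ≤ ‖x‖ ^ β := Real.one_le_rpow hx hβ0.le
    have h2 : |∫ y, φ y / ‖x - y‖ ^ β| ≤ ‖x‖ ^ (-β) * B.toReal := by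
      refine (habs x).trans ?_
      have := ENNReal.toReal_mono
        (ENNReal.mul_ne_top ENNReal.ofReal_ne_top hBfin) (boundB x hx)
      rwa [ENNReal.toReal_mul, ENNReal.toReal_ofReal (Real.rpow_nonneg (norm_nonneg x) _)]
        at this
    have h4 : (1 + ‖x‖ ^ β) ≤ 2 * ‖x‖ ^ β := by linarith
    have h6 : ‖x‖ ^ β * ‖x‖ ^ (-β) = 1 := by
      rw [← Real.rpow_add hR0]
      simp
    have h7 : (0:ℝ) ≤ AA.toReal := ENNReal.toReal_nonneg
    have h8 : (0:ℝ) ≤ ‖x‖ ^ (-β) := Real.rpow_nonneg (norm_nonneg x) _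
    have h9 : (1 + ‖x‖ ^ β) * (|c0| * |∫ y, φ y / ‖x - y‖ ^ β|) ≤
        2 * ‖x‖ ^ β * (|c0| * (‖x‖ ^ (-β) * B.toReal)) := by
      refine mul_le_mul h4 (mul_le_mul_of_nonneg_left h2 hc0n) (by positivity) (by positivity)
    have h10 : 2 * ‖x‖ ^ β * (|c0| * (‖x‖ ^ (-β) * B.toReal)) =
        |c0| * (2 * B.toReal) * (‖x‖ ^ β * ‖x‖ ^ (-β)) := by ring
    rw [h10, h6, mul_one] at h9
    nlinarith
end
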